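/- Let m ≥ 4 and let C be an m×n binary 2-covering array such that wt(c^i) ≤ ⌊m/2⌋ for every column c^i of C, and put s = min_{1≤i≤n} wt(c^i). Then for any integer s' with s < s' ≤ ⌊m/2⌋, there exists an m×n binary 2-covering array C' whose columns c'^i satisfy s' ≤ wt(c'^i) ≤ ⌊m/2⌋ and supp(c^i) ⊆ supp(c'^i) for all i = 1,…,n. -/

import Mathlib

/-- An `m × n` matrix over `B_q = {0,…,q-1}` is a `t`-covering array if for any `t`
distinct column indices and any `q`-ary vector of length `t`, some row realizes it. -/
def IsCoveringArray (m n q t : ℕ) (C : Fin m → Fin n → Fin q) : Prop :=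
  ∀ cols : Fin t → Fin n, Function.Injective cols →
    ∀ v : Fin t → Fin q, ∃ r : Fin m, ∀ j : Fin t, C r (cols j) = v j

/-- `CAN t n q` : the minimal size `m` for which a `CA(m; t, n, q)` exists. -/
noncomputable def CAN (t n q : ℕ) : ℕ :=
  sInf { m | ∃ C : Fin m → Fin n → Fin q, IsCoveringArray m n q t C }

/-- The weight of the `i`-th column: the number of nonzero entries. -/
def colWt {m n q : ℕ} (C : Fin m → Fin n → Fin q) (i : Fin n) : ℕ :=
  (Finset.univ.filter fun r : Fin m => (C r i : ℕ) ≠ 0).card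

/-- The support of the `i`-th column: the set of coordinates where it is nonzero. -/
def colSupp {m n q : ℕ} (C : Fin m → Fin n → Fin q) (i : Fin n) : Finset (Fin m) :=
  Finset.univ.filter fun r : Fin m => (C r i : ℕ) ≠ 0

/-- The Hamming distance between the `i`-th and `j`-th columns. -/
def colDist {m n q : ℕ} (C : Fin m → Fin n → Fin q) (i j : Fin n) : ℕ :=
  (Finset.univ.filter fun r : Fin m => C r i ≠ C r j).card

/-- Two arrays are equivalent if one is obtained from the other by a row permutation,
a column permutation, and value permutations applied columnwise. -/
def CAEquiv {m n q : ℕ} (C C' : Fin m → Fin n → Fin q) : Prop :=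
  ∃ (σ : Equiv.Perm (Fin m)) (τ : Equiv.Perm (Fin n)) (f : Fin n → Equiv.Perm (Fin q)),
    ∀ r i, C' r i = f i (C (σ r) (τ i))

/-- The standard maximal binary 2-covering array of size `m` : an
`m × (m-1).choose (m/2 - 1)` binary matrix whose first row is all ones and whose columns,
restricted to the remaining `m - 1` rows, are exactly (i.e. are pairwise distinct) the binary
vectors of length `m-1` with `m/2 - 1` ones. -/
def IsStandardMaxArray (m : ℕ) (S : Fin m → Fin ((m-1).choose (m/2 - 1)) → Fin 2) : Prop :=
  (∀ (r : Fin m) (i), (r : ℕ) = 0 → S r i = 1) ∧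
  (Function.Injective fun i => fun r => S r i) ∧
  (∀ i, (Finset.univ.filter fun r : Fin m => (r : ℕ) ≠ 0 ∧ S r i = 1).card = m/2 - 1)

-- auxiliary lemmas
section Aux
open Finset

lemma card_supersets {m : ℕ} (A : Finset (Fin m)) :
    ((Finset.univ : Finset (Finset (Fin m))).filter fun B => A ⊆ B ∧ B.card = A.card + 1).card
      = m - A.card := by
  classical
  have himg : ((Finset.univ : Finset (Finset (Fin m))).filter
      fun B => A ⊆ B ∧ B.card = A.card + 1) = Aᶜ.image (fun x => insert x A) := by
    ext B
    simp only [Finset.mem_filter, Finset.mem_univ, true_and, Finset.mem_image, Finset.mem_compl]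
    constructor
    · rintro ⟨hsub, hcard⟩
      obtain ⟨x, hxB, hxA⟩ : ∃ x, x ∈ B ∧ x ∉ A := by
        by_contra hcon
        push_neg at hcon
        have hBA : B ⊆ A := fun y hy => hcon y hy
        have := Finset.card_le_card hBA
        omega
      refine ⟨x, hxA, ?_⟩
      have h1 : insert x A ⊆ B := Finset.insert_subset hxB hsub
      have h2 : B.card ≤ (insert x A).card := by
        rw [Finset.card_insert_of_notMem hxA]; omega
      exact Finset.eq_of_subset_of_card_le h1 h2
    · rintro ⟨x, hxA, rfl⟩
      exact ⟨Finset.subset_insert _ _, Finset.card_insert_of_notMem hxA⟩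
  rw [himg, Finset.card_image_of_injOn, Finset.card_compl, Fintype.card_fin]
  intro x hx y hy hxy
  simp only [Finset.coe_compl, Set.mem_compl_iff, Finset.mem_coe] at hx hy
  have hxy' : insert x A = insert y A := hxy
  have : x ∈ insert y A := hxy' ▸ Finset.mem_insert_self x A
  rcases Finset.mem_insert.mp this with h | h
  · exact h
  · exact absurd h hx

lemma push_lemma {m n h : ℕ} (hm : 2 * h ≤ m) (N : ℕ) :
    ∀ S : Fin n → Finset (Fin m), (∑ i, (h - (S i).card)) ≤ N →
      (∀ i, (S i).card ≤ h) → (∀ i j : Fin n, i ≠ j → ¬ S i ⊆ S j) →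
      ∃ T : Fin n → Finset (Fin m),
        (∀ i, S i ⊆ T i ∧ (T i).card = h) ∧ ∀ i j : Fin n, i ≠ j → T i ≠ T j := by
  classical
  induction N with
  | zero =>
    intro S hsum hcard hinc
    refine ⟨S, fun i => ⟨subset_rfl, ?_⟩, fun i j hij heq => hinc i j hij (heq ▸ subset_rfl)⟩
    have h0 : (∑ i, (h - (S i).card)) = 0 := Nat.le_zero.mp hsum
    have := (Finset.sum_eq_zero_iff.mp h0) i (Finset.mem_univ i)
    have := hcard i
    omega
  | succ N ih =>
    intro S hsum hcard hinc
    by_cases hdone : ∀ i, (S i).card = h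
    · exact ⟨S, fun i => ⟨subset_rfl, hdone i⟩,
        fun i j hij heq => hinc i j hij (heq ▸ subset_rfl)⟩
    push_neg at hdone
    obtain ⟨i0, hi0⟩ := hdone
    have hne : (Finset.univ : Finset (Fin n)).Nonempty := ⟨i0, Finset.mem_univ _⟩
    set a := Finset.univ.inf' hne (fun i => (S i).card) with ha
    have hamin : ∀ i, a ≤ (S i).card := fun i => Finset.inf'_le _ (Finset.mem_univ i)
    obtain ⟨iw, -, hiw⟩ := Finset.exists_mem_eq_inf' hne (fun i => (S i).card)
    have hah : a < h := lt_of_le_of_lt (hamin i0) (lt_of_le_of_ne (hcard i0) hi0)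
    set P : Finset (Fin n) := Finset.univ.filter (fun i => (S i).card = a) with hP
    have hmemP : ∀ i, i ∈ P ↔ (S i).card = a := by
      intro i; simp [hP]
    set t : {i // i ∈ P} → Finset (Finset (Fin m)) := fun i =>
      Finset.univ.filter (fun B => S i.1 ⊆ B ∧ B.card = a + 1) with ht
    -- Hall condition
    have hall : ∀ s : Finset {i // i ∈ P}, s.card ≤ (s.biUnion t).card := by
      intro s
      set r : {i // i ∈ P} → Finset (Fin m) → Prop :=
        fun i B => S i.1 ⊆ B ∧ B.card = a + 1 with hr
      have hdc := Finset.card_mul_le_card_mul r (s := s) (t := s.biUnion t)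
        (m := m - a) (n := a + 1) ?_ ?_
      · have h1 : s.card * (a + 1) ≤ s.card * (m - a) :=
          Nat.mul_le_mul_left _ (by omega)
        exact Nat.le_of_mul_le_mul_right (le_trans h1 hdc) (Nat.succ_pos a)
      · -- lower bound on degrees above
        intro i hi
        have hAcard : (S i.1).card = a := (hmemP i.1).mp i.2
        have heq : (s.biUnion t).bipartiteAbove r i
            = Finset.univ.filter (fun B => S i.1 ⊆ B ∧ B.card = (S i.1).card + 1) := by
          ext B
          simp only [Finset.bipartiteAbove, Finset.mem_filter, Finset.mem_biUnion,
            Finset.mem_univ, true_and, hAcard]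
          constructor
          · rintro ⟨-, hB⟩; exact hB
          · intro hB
            exact ⟨⟨i, hi, by simp [ht, hr, hB.1, hB.2]⟩, hB⟩
        rw [heq, card_supersets, hAcard]
      · -- upper bound on degrees below
        intro B hB
        have hBcard : B.card = a + 1 := by
          simp only [Finset.mem_biUnion, ht, Finset.mem_filter] at hB
          obtain ⟨i, -, -, -, h2⟩ := hB
          exact h2
        have hsub : (s.bipartiteBelow r B).card ≤ (B.powersetCard a).card := by
          apply Finset.card_le_card_of_injOn (fun i => S i.1)
          · intro i hi
            simp only [Finset.bipartiteBelow, Finset.mem_coe, Finset.mem_filter] at hi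
            exact Finset.mem_powersetCard.mpr ⟨hi.2.1, (hmemP i.1).mp i.2⟩
          · intro i hi j hj hSij
            by_contra hij
            have hij' : i.1 ≠ j.1 := fun hc => hij (Subtype.ext hc)
            have hSij' : S i.1 = S j.1 := hSij
            exact hinc i.1 j.1 hij' (hSij' ▸ subset_rfl)
        rw [Finset.card_powersetCard] at hsub
        have hch : (a + 1).choose a = a + 1 := by
          rw [← Nat.choose_symm (Nat.le_succ a)]; simp
        have := Nat.choose_le_choose a (Nat.le_of_eq hBcard)
        omega
    obtain ⟨f, hfinj, hft⟩ := (Finset.all_card_le_biUnion_card_iff_exists_injective t).mp hall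
    set S' : Fin n → Finset (Fin m) := fun i =>
      if hi : i ∈ P then f ⟨i, hi⟩ else S i with hS'
    have hftP : ∀ (i : Fin n) (hi : i ∈ P), S i ⊆ f ⟨i, hi⟩ ∧ (f ⟨i, hi⟩).card = a + 1 := by
      intro i hi
      have := hft ⟨i, hi⟩
      simp only [t, Finset.mem_filter, Finset.mem_univ, true_and] at this
      exact this
    have hsub' : ∀ i, S i ⊆ S' i := by
      intro i
      by_cases hi : i ∈ P
      · simp only [hS', dif_pos hi]; exact (hftP i hi).1
      · simp only [hS', dif_neg hi]
        exact subset_rfl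
    have hcardP : ∀ (i : Fin n), i ∈ P → (S' i).card = a + 1 := by
      intro i hi
      simp only [hS', dif_pos hi]
      exact (hftP i hi).2
    have hcard_notP : ∀ (i : Fin n), i ∉ P → S' i = S i ∧ a + 1 ≤ (S i).card := by
      intro i hi
      have h1 : (S i).card ≠ a := fun hc => hi ((hmemP i).mpr hc)
      have h2 := hamin i
      exact ⟨by simp only [hS', dif_neg hi], by omega⟩
    have hcard' : ∀ i, (S' i).card ≤ h := by
      intro i
      by_cases hi : i ∈ P
      · rw [hcardP i hi]; omega
      · rw [(hcard_notP i hi).1]; exact hcard i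
    have hcardGe : ∀ i, a + 1 ≤ (S' i).card := by
      intro i
      by_cases hi : i ∈ P
      · rw [hcardP i hi]
      · rw [(hcard_notP i hi).1]; exact (hcard_notP i hi).2
    have hinc' : ∀ i j : Fin n, i ≠ j → ¬ S' i ⊆ S' j := by
      intro i j hij hsubij
      by_cases hi : i ∈ P <;> by_cases hj : j ∈ P
      · -- both pushed
        have hei : S' i = f ⟨i, hi⟩ := by simp only [hS', dif_pos hi]
        have hej : S' j = f ⟨j, hj⟩ := by simp only [hS', dif_pos hj]
        have hcc : (S' j).card ≤ (S' i).card := by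
          rw [hcardP i hi, hcardP j hj]
        have heq : S' i = S' j := Finset.eq_of_subset_of_card_le hsubij hcc
        rw [hei, hej] at heq
        have := hfinj heq
        exact hij (congrArg Subtype.val this)
      · -- i pushed, j not
        have hej : S' j = S j := (hcard_notP j hj).1
        rw [hej] at hsubij
        exact hinc i j hij ((hsub' i).trans hsubij)
      · -- i not pushed, j pushed
        have hei : S' i = S i := (hcard_notP i hi).1
        rw [hei] at hsubij
        have hcc : (S' j).card ≤ (S i).card := by
          rw [hcardP j hj]; exact (hcard_notP i hi).2
        have heq : S i = S' j := Finset.eq_of_subset_of_card_le hsubij hcc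
        exact hinc j i hij.symm (heq ▸ hsub' j)
      · -- neither
        rw [(hcard_notP i hi).1, (hcard_notP j hj).1] at hsubij
        exact hinc i j hij hsubij
    have hmeas : (∑ i, (h - (S' i).card)) ≤ N := by
      have hlt : (∑ i, (h - (S' i).card)) < ∑ i, (h - (S i).card) := by
        apply Finset.sum_lt_sum
        · intro i _
          have := Finset.card_le_card (hsub' i)
          omega
        · refine ⟨iw, Finset.mem_univ _, ?_⟩
          have hiwP : iw ∈ P := (hmemP iw).mpr (by rw [← hiw, ← ha])
          have := hcardP iw hiwP
          have : (S iw).card = a := (hmemP iw).mp hiwP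
          have := hcardGe iw
          omega
      omega
    obtain ⟨T, hT1, hT2⟩ := ih S' hmeas hcard' hinc'
    exact ⟨T, fun i => ⟨(hsub' i).trans (hT1 i).1, (hT1 i).2⟩, hT2⟩

lemma cover_pair {m n : ℕ} {C : Fin m → Fin n → Fin 2} (hC : IsCoveringArray m n 2 2 C)
    {i j : Fin n} (hij : i ≠ j) (a b : Fin 2) : ∃ r, C r i = a ∧ C r j = b := by
  have hinj : Function.Injective ![i, j] := by
    intro x y hxy
    fin_cases x <;> fin_cases y <;> simp_all
  obtain ⟨r, hr⟩ := hC ![i, j] hinj ![a, b]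
  exact ⟨r, by simpa using hr 0, by simpa using hr 1⟩

end Aux

/-- columns of minimal weight of a binary 2-covering array can be enlarged:
if all columns have weight at most `⌊m/2⌋` and `s` is the minimal column weight, then for
any `s < s' ≤ ⌊m/2⌋` there is a binary 2-covering array of the same size and degree all of
whose column weights lie in `[s', ⌊m/2⌋]` with supports containing the original supports. -/
theorem weight_increase (m n : ℕ) (hm : 4 ≤ m) (C : Fin m → Fin n → Fin 2)
    (hC : IsCoveringArray m n 2 2 C)
    (hwt : ∀ i : Fin n, colWt C i ≤ m / 2)
    (s : ℕ) (hs : IsLeast (Set.range fun i : Fin n => colWt C i) s)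
    (s' : ℕ) (hs1 : s < s') (hs2 : s' ≤ m / 2) :
    ∃ C' : Fin m → Fin n → Fin 2, IsCoveringArray m n 2 2 C' ∧
      ∀ i : Fin n, s' ≤ colWt C' i ∧ colWt C' i ≤ m / 2 ∧ colSupp C i ⊆ colSupp C' i := by
  classical
  set h := m / 2 with hh
  have h2 : 2 * h ≤ m := by omega
  have hwt' : ∀ i, (colSupp C i).card ≤ h := hwt
  have hinc : ∀ i j : Fin n, i ≠ j → ¬ colSupp C i ⊆ colSupp C j := by
    intro i j hij hsub
    obtain ⟨r, hri, hrj⟩ := cover_pair hC hij 1 0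
    have h1 : r ∈ colSupp C i := by simp [colSupp, hri]
    have h0 : r ∉ colSupp C j := by simp [colSupp, hrj]
    exact h0 (hsub h1)
  have hint : ∀ i j : Fin n, i ≠ j → ∃ r, r ∈ colSupp C i ∧ r ∈ colSupp C j := by
    intro i j hij
    obtain ⟨r, hri, hrj⟩ := cover_pair hC hij 1 1
    exact ⟨r, by simp [colSupp, hri], by simp [colSupp, hrj]⟩
  obtain ⟨T, hT1, hT2⟩ := push_lemma h2 (∑ i, (h - (colSupp C i).card)) (colSupp C)
    le_rfl hwt' hinc
  set C' : Fin m → Fin n → Fin 2 := fun r i => if r ∈ T i then 1 else 0 with hC'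
  have hsupp' : ∀ i, colSupp C' i = T i := by
    intro i
    ext r
    by_cases hr : r ∈ T i <;> simp [colSupp, hC', hr]
  have hwtC' : ∀ i, colWt C' i = h := by
    intro i
    have : colWt C' i = (colSupp C' i).card := rfl
    rw [this, hsupp' i, (hT1 i).2]
  refine ⟨C', ?_, fun i => ⟨by rw [hwtC' i]; exact hs2, by rw [hwtC' i],
    by rw [hsupp' i]; exact (hT1 i).1⟩⟩
  intro cols hinj v
  have hij : cols 0 ≠ cols 1 := fun hc => by
    have := hinj hc
    exact absurd this (by decide)
  set i := cols 0
  set j := cols 1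
  have key : ∀ a b : Fin 2, ∃ r : Fin m, C' r i = a ∧ C' r j = b := by
    have hTne : T i ≠ T j := hT2 i j hij
    have hci : (T i).card = h := (hT1 i).2
    have hcj : (T j).card = h := (hT1 j).2
    have h10 : ∃ r, r ∈ T i ∧ r ∉ T j := by
      by_contra hcon
      push_neg at hcon
      exact hTne (Finset.eq_of_subset_of_card_le hcon (by omega))
    have h01 : ∃ r, r ∈ T j ∧ r ∉ T i := by
      by_contra hcon
      push_neg at hcon
      exact hTne (Finset.eq_of_subset_of_card_le hcon (by omega)).symm
    have h11 : ∃ r, r ∈ T i ∧ r ∈ T j := by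
      obtain ⟨r, h1, h2⟩ := hint i j hij
      exact ⟨r, (hT1 i).1 h1, (hT1 j).1 h2⟩
    have h00 : ∃ r, r ∉ T i ∧ r ∉ T j := by
      have hinter : 1 ≤ (T i ∩ T j).card := by
        obtain ⟨r, h1, h2⟩ := h11
        exact Finset.card_pos.mpr ⟨r, Finset.mem_inter.mpr ⟨h1, h2⟩⟩
      have hunion : (T i ∪ T j).card < m := by
        have := Finset.card_union_add_card_inter (T i) (T j)
        omega
      have : ((T i ∪ T j)ᶜ).Nonempty := by
        rw [← Finset.card_pos, Finset.card_compl, Fintype.card_fin]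
        omega
      obtain ⟨r, hr⟩ := this
      rw [Finset.mem_compl, Finset.mem_union] at hr
      push_neg at hr
      exact ⟨r, hr.1, hr.2⟩
    intro a b
    have hfin : ∀ x : Fin 2, x = 0 ∨ x = 1 := by decide
    rcases hfin a with rfl | rfl <;> rcases hfin b with rfl | rfl
    · obtain ⟨r, h1, h2⟩ := h00; exact ⟨r, by simp [hC', h1, h2]⟩
    · obtain ⟨r, h1, h2⟩ := h01; exact ⟨r, by simp [hC', h1, h2]⟩
    · obtain ⟨r, h1, h2⟩ := h10; exact ⟨r, by simp [hC', h1, h2]⟩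
    · obtain ⟨r, h1, h2⟩ := h11; exact ⟨r, by simp [hC', h1, h2]⟩
  obtain ⟨r, hr1, hr2⟩ := key (v 0) (v 1)
  refine ⟨r, fun jj => ?_⟩
  fin_cases jj
  · exact hr1
  · exact hr2
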